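/- For β, γ ∈ (0,1), define h(v) = v + (1/γ)((1+v^{1/β})^β − v) for v ≥ 1. Then h'(v) = 1 + (1/γ)((1+v^{−1/β})^{β−1} − 1), and: (a) if γ ≥ 1 − 2^{β−1} then h is nondecreasing on [1,∞) with minimum h(1) = 1 + (2^β−1)/γ; (b) if γ < 1 − 2^{β−1} then h attains its minimum on [1,∞) at v₀ = ((1−γ)^{−1/(1−β)} − 1)^{−β} > 1, with minimum value ((1−γ)/γ)((1−γ)^{−1/(1−β)} − 1)^{1−β}. -/

import Mathlib

theorem stmt10 (β γ : ℝ) (hβ : β ∈ Set.Ioo (0:ℝ) 1) (hγ : γ ∈ Set.Ioo (0:ℝ) 1)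
    (h : ℝ → ℝ)
    (hh : ∀ v : ℝ, h v = v + (1/γ) * ((1 + v ^ (1/β)) ^ β - v)) :
    (∀ v : ℝ, 1 ≤ v → deriv h v = 1 + (1/γ) * ((1 + v ^ (-1/β)) ^ (β - 1) - 1)) ∧
    (1 - (2:ℝ) ^ (β - 1) ≤ γ →
      MonotoneOn h (Set.Ici 1) ∧
      h 1 = 1 + ((2:ℝ) ^ β - 1) / γ ∧
      ∀ v ∈ Set.Ici (1:ℝ), h 1 ≤ h v) ∧
    (γ < 1 - (2:ℝ) ^ (β - 1) →
      1 < ((1-γ) ^ (-1/(1-β)) - 1) ^ (-β) ∧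
      (∀ v ∈ Set.Ici (1:ℝ), h (((1-γ) ^ (-1/(1-β)) - 1) ^ (-β)) ≤ h v) ∧
      h (((1-γ) ^ (-1/(1-β)) - 1) ^ (-β))
        = ((1-γ)/γ) * ((1-γ) ^ (-1/(1-β)) - 1) ^ (1-β)) := by
  obtain ⟨hβ0, hβ1⟩ := hβ
  obtain ⟨hγ0, hγ1⟩ := hγ
  have hβne : β ≠ 0 := ne_of_gt hβ0
  have hγne : γ ≠ 0 := ne_of_gt hγ0
  have hfun : h = fun v => v + (1/γ) * ((1 + v ^ (1/β)) ^ β - v) := funext hh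
  subst hfun
  clear hh
  -- the derivative
  have hkey : ∀ v : ℝ, 0 < v →
      HasDerivAt (fun v => v + (1/γ) * ((1 + v ^ (1/β)) ^ β - v))
        (1 + (1/γ) * ((1 + v ^ (-1/β)) ^ (β - 1) - 1)) v := by
    intro v hv
    have ht : (0:ℝ) < v ^ (1/β) := Real.rpow_pos_of_pos hv _
    have h1 : HasDerivAt (fun x : ℝ => x ^ (1/β)) ((1/β) * v ^ (1/β - 1)) v :=
      Real.hasDerivAt_rpow_const (Or.inl hv.ne')
    have h3 : HasDerivAt (fun x : ℝ => 1 + x ^ (1/β)) ((1/β) * v ^ (1/β-1)) v := by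
      exact h1.const_add 1
    have h2 : HasDerivAt (fun x : ℝ => (1 + x ^ (1/β)) ^ β)
        (β * (1 + v ^ (1/β)) ^ (β - 1) * ((1/β) * v ^ (1/β - 1))) v := by
      exact (Real.hasDerivAt_rpow_const (x := 1 + v ^ (1/β)) (p := β)
        (Or.inl (by positivity))).comp v h3
    have hall : HasDerivAt (fun v => v + (1/γ) * ((1 + v ^ (1/β)) ^ β - v))
        (1 + (1/γ) * (β * (1 + v ^ (1/β)) ^ (β - 1) * ((1/β) * v ^ (1/β - 1)) - 1)) v :=
      (hasDerivAt_id v).add ((h2.sub (hasDerivAt_id v)).const_mul (1/γ))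
    have hid : (1 + v ^ (-1/β)) ^ (β - 1) = (1 + v ^ (1/β)) ^ (β - 1) * v ^ (1/β - 1) := by
      have e1 : v ^ (-1/β) = (v ^ (1/β))⁻¹ := by
        rw [neg_div, Real.rpow_neg hv.le]
      have e2 : (1:ℝ) + v ^ (-1/β) = (1 + v ^ (1/β)) / v ^ (1/β) := by
        rw [e1]; field_simp; ring
      rw [e2, Real.div_rpow (by positivity) ht.le]
      have e3 : (v ^ (1/β)) ^ (β-1) = v ^ (1 - 1/β) := by
        rw [← Real.rpow_mul hv.le]
        congr 1; field_simp
      rw [e3, div_eq_mul_inv, ← Real.rpow_neg hv.le]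
      congr 2; ring
    convert hall using 1
    rw [hid]
    field_simp
  have hderiv : ∀ v : ℝ, 0 < v →
      deriv (fun v => v + (1/γ) * ((1 + v ^ (1/β)) ^ β - v)) v
        = 1 + (1/γ) * ((1 + v ^ (-1/β)) ^ (β - 1) - 1) := fun v hv => (hkey v hv).deriv
  -- monotonicity of the core quantity
  have hcore : ∀ a b : ℝ, 0 < a → a ≤ b →
      (1 + a ^ (-1/β)) ^ (β-1) ≤ (1 + b ^ (-1/β)) ^ (β-1) := by
    intro a b ha hab
    have hexp : -1/β ≤ 0 := by
      rw [neg_div]; exact neg_nonpos.mpr (by positivity)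
    have h1 : b ^ (-1/β) ≤ a ^ (-1/β) := Real.rpow_le_rpow_of_nonpos ha hab hexp
    have hb : 0 < b := ha.trans_le hab
    have h2 : (0:ℝ) < 1 + b ^ (-1/β) := by positivity
    exact Real.rpow_le_rpow_of_nonpos h2 (by linarith) (by linarith)
  have hcore1 : (1 + (1:ℝ) ^ (-1/β)) ^ (β-1) = (2:ℝ) ^ (β-1) := by
    rw [Real.one_rpow]; norm_num
  refine ⟨fun v hv => hderiv v (by linarith), ?_, ?_⟩
  · -- case (a)
    intro hcase
    have hmono : MonotoneOn (fun v => v + (1/γ) * ((1 + v ^ (1/β)) ^ β - v)) (Set.Ici 1) := by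
      apply monotoneOn_of_deriv_nonneg (convex_Ici 1)
      · intro v hv
        exact ((hkey v (by exact lt_of_lt_of_le one_pos hv)).continuousAt).continuousWithinAt
      · rw [interior_Ici]
        intro v hv
        exact ((hkey v (by exact lt_trans one_pos hv)).differentiableAt).differentiableWithinAt
      · rw [interior_Ici]
        intro v hv
        rw [hderiv v (lt_trans one_pos hv)]
        have hX : (1:ℝ) - γ ≤ (1 + v ^ (-1/β)) ^ (β-1) := by
          calc (1:ℝ) - γ ≤ 2 ^ (β-1) := by linarith
          _ = (1 + (1:ℝ) ^ (-1/β)) ^ (β-1) := hcore1.symm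
          _ ≤ _ := hcore 1 v one_pos hv.le
        have h3 : (0:ℝ) < 1/γ := by positivity
        have h4 : (1/γ) * γ = 1 := by field_simp
        nlinarith [mul_le_mul_of_nonneg_left (show -γ ≤ (1 + v ^ (-1/β)) ^ (β-1) - 1 by linarith) h3.le]
    refine ⟨hmono, ?_, fun v hv => hmono Set.self_mem_Ici hv hv⟩
    simp only [Real.one_rpow]
    norm_num
    ring
  · -- case (b)
    intro hcase
    set A : ℝ := (1-γ) ^ (-1/(1-β)) - 1 with hA
    have h1γ : 0 < 1 - γ := by linarith
    have h1β : 0 < 1 - β := by linarith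
    have h1βne : (1:ℝ) - β ≠ 0 := ne_of_gt h1β
    have hexpneg : -1/(1-β) < 0 := div_neg_of_neg_of_pos (by norm_num) h1β
    have hgt1 : 1 < (1-γ) ^ (-1/(1-β)) :=
      (Real.one_lt_rpow_iff_of_pos h1γ).mpr (Or.inr ⟨by linarith, hexpneg⟩)
    have hApos : 0 < A := by rw [hA]; linarith
    have hAlt1 : A < 1 := by
      have h2 : (2:ℝ)^(β-1) < 1 - γ := by linarith
      have h2pos : (0:ℝ) < 2^(β-1) := by positivity
      have h3 : (1-γ) ^ (-1/(1-β)) < ((2:ℝ)^(β-1)) ^ (-1/(1-β)) :=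
        Real.rpow_lt_rpow_of_neg h2pos h2 hexpneg
      have h4 : ((2:ℝ)^(β-1)) ^ (-1/(1-β)) = 2 := by
        rw [← Real.rpow_mul (by norm_num)]
        rw [show (β-1) * (-1/(1-β)) = 1 by field_simp; ring, Real.rpow_one]
      rw [hA]; rw [h4] at h3; linarith
    have hv0gt1 : 1 < A ^ (-β) :=
      (Real.one_lt_rpow_iff_of_pos hApos).mpr (Or.inr ⟨hAlt1, by linarith⟩)
    have hv0pos : 0 < A ^ (-β) := Real.rpow_pos_of_pos hApos _
    have hv0inv : (A^(-β)) ^ (-1/β) = A := by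
      rw [← Real.rpow_mul hApos.le, show (-β) * (-1/β) = 1 by field_simp, Real.rpow_one]
    have hsum : (1:ℝ) + A = (1-γ) ^ (-1/(1-β)) := by rw [hA]; ring
    have hcorev0 : (1 + (A^(-β)) ^ (-1/β)) ^ (β-1) = 1 - γ := by
      rw [hv0inv, hsum, ← Real.rpow_mul h1γ.le,
        show (-1/(1-β)) * (β-1) = 1 by field_simp; ring, Real.rpow_one]
    -- antitone on [1, v₀]
    have hanti : AntitoneOn (fun v => v + (1/γ) * ((1 + v ^ (1/β)) ^ β - v))
        (Set.Icc 1 (A^(-β))) := by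
      apply antitoneOn_of_deriv_nonpos (convex_Icc 1 (A^(-β)))
      · intro v hv
        exact ((hkey v (lt_of_lt_of_le one_pos hv.1)).continuousAt).continuousWithinAt
      · rw [interior_Icc]
        intro v hv
        exact ((hkey v (lt_trans one_pos hv.1)).differentiableAt).differentiableWithinAt
      · rw [interior_Icc]
        intro v hv
        rw [hderiv v (lt_trans one_pos hv.1)]
        have hX : (1 + v ^ (-1/β)) ^ (β-1) ≤ 1 - γ := by
          rw [← hcorev0]
          exact hcore v (A^(-β)) (lt_trans one_pos hv.1) hv.2.le
        have h3 : (0:ℝ) < 1/γ := by positivity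
        have h4 : (1/γ) * γ = 1 := by field_simp
        nlinarith [mul_le_mul_of_nonneg_left (show (1 + v ^ (-1/β)) ^ (β-1) - 1 ≤ -γ by linarith) h3.le]
    -- monotone on [v₀, ∞)
    have hmono2 : MonotoneOn (fun v => v + (1/γ) * ((1 + v ^ (1/β)) ^ β - v))
        (Set.Ici (A^(-β))) := by
      apply monotoneOn_of_deriv_nonneg (convex_Ici _)
      · intro v hv
        exact ((hkey v (lt_of_lt_of_le hv0pos hv)).continuousAt).continuousWithinAt
      · rw [interior_Ici]
        intro v hv
        exact ((hkey v (lt_trans hv0pos hv)).differentiableAt).differentiableWithinAt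
      · rw [interior_Ici]
        intro v hv
        rw [hderiv v (lt_trans hv0pos hv)]
        have hX : (1:ℝ) - γ ≤ (1 + v ^ (-1/β)) ^ (β-1) := by
          rw [← hcorev0]
          exact hcore (A^(-β)) v hv0pos hv.le
        have h3 : (0:ℝ) < 1/γ := by positivity
        have h4 : (1/γ) * γ = 1 := by field_simp
        nlinarith [mul_le_mul_of_nonneg_left (show -γ ≤ (1 + v ^ (-1/β)) ^ (β-1) - 1 by linarith) h3.le]
    refine ⟨hv0gt1, ?_, ?_⟩
    · intro v hv
      by_cases hle : v ≤ A^(-β)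
      · exact hanti ⟨hv, hle⟩ ⟨hv0gt1.le, le_refl _⟩ hle
      · exact hmono2 Set.self_mem_Ici (le_of_not_ge hle) (le_of_not_ge hle)
    · -- minimum value
      have e1 : (A^(-β))^(1/β) = A⁻¹ := by
        rw [← Real.rpow_mul hApos.le, show (-β) * (1/β) = -1 by field_simp,
          Real.rpow_neg_one]
      have hAne : A ≠ 0 := ne_of_gt hApos
      have e2 : (1:ℝ) + A⁻¹ = (1+A)/A := by field_simp; ring
      have e3 : ((1+A)/A)^β = (1+A)^β * A^(-β) := by
        rw [Real.div_rpow (by positivity) hApos.le, div_eq_mul_inv, ← Real.rpow_neg hApos.le]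
      have e4 : (1+A)^β = (1-γ)^((-1/(1-β))*β) := by
        rw [hsum, ← Real.rpow_mul h1γ.le]
      have e5 : A^((1:ℝ)-β) = A * A^(-β) := by
        rw [show (1:ℝ)-β = 1 + (-β) by ring, Real.rpow_add hApos, Real.rpow_one]
      have e6 : (1-γ) * A = (1-γ)^((-1/(1-β))*β) - (1-γ) := by
        rw [hA, mul_sub, mul_one]
        have h7 : (1-γ) * (1-γ)^(-1/(1-β)) = (1-γ)^(1 + (-1/(1-β))) := by
          rw [Real.rpow_add h1γ, Real.rpow_one]
        rw [h7, show 1 + (-1/(1-β)) = (-1/(1-β))*β by field_simp; ring]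
      have key : ∀ V C D : ℝ, (1-γ)*D = C - (1-γ) →
          V + (1/γ)*(C * V - V) = ((1-γ)/γ) * (D * V) := by
        intro V C D hD
        field_simp
        linear_combination (-V) * hD
      show A^(-β) + (1/γ) * ((1 + (A^(-β))^(1/β))^β - A^(-β)) = ((1-γ)/γ) * A^(1-β)
      rw [e1, e2, e3, e4, e5]
      exact key _ _ _ e6
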